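/- arXiv:2201.12054 — 2 statements merged into one kernel-verified Lean document; each statement's English description precedes it below -/
import Mathlib

section
/- Let k : [a,b] → ℝ be continuous and define η'' : [a,b] → ℝ by η''(z) = ∫_a^b G''_t(z) · k(t) dt. Then for every function f : ℝ → ℝ that is twice continuously differentiable on [a,b] and satisfies f(a) = f(b) = 0, one has ∫_a^b η''(z) · f''(z) dz = ∫_a^b k(t) · f(t) dt. That is, the function with second derivative η'' represents the integral functional f ↦ ∫_a^b k(t) f(t) dt with respect to the inner product ⟨u, v⟩ = ∫_a^b u''(z) v''(z) dz. -/
open MeasureTheory Set intervalIntegral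

/-- The second derivative of the reproducing kernel of the space
`W = {f : f(a)=f(b)=0, f'' ∈ L²}`:
`G''_y(z) = (z−a)(y−b)/(b−a)` for `z < y` and `(y−a)(z−b)/(b−a)` for `y ≤ z`. -/
noncomputable def Gpp (a b y z : ℝ) : ℝ :=
  if z < y then (z - a) * (y - b) / (b - a) else (y - a) * (z - b) / (b - a)

lemma Gpp_measurable (a b t : ℝ) : Measurable (fun z => Gpp a b t z) := by
  unfold Gpp
  exact Measurable.ite (measurableSet_lt measurable_id measurable_const)
    (by fun_prop) (by fun_prop)

lemma Gpp_measurable2 (a b : ℝ) : Measurable (fun p : ℝ × ℝ => Gpp a b p.1 p.2) := by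
  unfold Gpp
  exact Measurable.ite (measurableSet_lt measurable_snd measurable_fst)
    (by fun_prop) (by fun_prop)

lemma Gpp_bound {a b t z : ℝ} (hab : a < b) (ht : t ∈ Set.Icc a b)
    (hz : z ∈ Set.Icc a b) : |Gpp a b t z| ≤ b - a := by
  obtain ⟨ht1, ht2⟩ := ht
  obtain ⟨hz1, hz2⟩ := hz
  have hba : (0:ℝ) < b - a := by linarith
  unfold Gpp
  split_ifs with h
  · rw [abs_div, abs_of_pos hba, div_le_iff₀ hba, abs_mul,
      abs_of_nonneg (by linarith), abs_of_nonpos (by linarith)]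
    nlinarith
  · rw [abs_div, abs_of_pos hba, div_le_iff₀ hba, abs_mul,
      abs_of_nonneg (by linarith), abs_of_nonpos (by linarith)]
    nlinarith

/-- Integration by parts / FTC: `∫_u^v (z-c) f'' = [(z-c) f' - f]_u^v`. -/
lemma ftc_part {a b : ℝ} (f f' f'' : ℝ → ℝ)
    (hf' : ∀ t ∈ Set.Icc a b, HasDerivWithinAt f (f' t) (Set.Icc a b) t)
    (hf'' : ∀ t ∈ Set.Icc a b, HasDerivWithinAt f' (f'' t) (Set.Icc a b) t)
    (hcont : ContinuousOn f'' (Set.Icc a b)) (c : ℝ)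
    {u v : ℝ} (huv : u ≤ v) (hu : a ≤ u) (hv : v ≤ b) :
    ∫ z in u..v, (z - c) * f'' z =
      ((v - c) * f' v - f v) - ((u - c) * f' u - f u) := by
  have hfc : ContinuousOn f (Set.Icc a b) := fun t ht => (hf' t ht).continuousWithinAt
  have hf'c : ContinuousOn f' (Set.Icc a b) := fun t ht => (hf'' t ht).continuousWithinAt
  have hsub : Set.Icc u v ⊆ Set.Icc a b := Set.Icc_subset_Icc hu hv
  apply intervalIntegral.integral_eq_sub_of_hasDeriv_right_of_le huv
  · exact ((continuousOn_id.sub continuousOn_const).mul (hf'c.mono hsub)).sub (hfc.mono hsub)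
  · intro x hx
    have hx' : x ∈ Set.Icc a b := ⟨by linarith [hx.1], by linarith [hx.2]⟩
    have hnb : Set.Icc a b ∈ nhds x := Icc_mem_nhds (by linarith [hx.1]) (by linarith [hx.2])
    have hdf : HasDerivAt f (f' x) x := (hf' x hx').hasDerivAt hnb
    have hdf' : HasDerivAt f' (f'' x) x := (hf'' x hx').hasDerivAt hnb
    have := ((((hasDerivAt_id x).sub_const c).mul hdf').sub hdf).hasDerivWithinAt
      (s := Set.Ioi x)
    convert this using 1
    · funext y
      simp only [id_eq, Pi.mul_apply, Pi.sub_apply]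
    simp only [id_eq]
    ring
  · apply ContinuousOn.intervalIntegrable
    apply ContinuousOn.mul
    · exact (continuousOn_id.sub continuousOn_const)
    · apply hcont.mono
      rw [Set.uIcc_of_le huv]
      exact hsub

/-- Interval integrability of `z ↦ Gpp a b t z * f'' z`. -/
lemma Gpp_mul_intervalIntegrable {a b t : ℝ} (hab : a < b) (ht : t ∈ Set.Icc a b)
    (f'' : ℝ → ℝ) (hcont : ContinuousOn f'' (Set.Icc a b))
    {u v : ℝ} (huv : u ≤ v) (hu : a ≤ u) (hv : v ≤ b) :
    IntervalIntegrable (fun z => Gpp a b t z * f'' z) MeasureTheory.volume u v := by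
  obtain ⟨C, hC⟩ := (isCompact_Icc (a := a) (b := b)).exists_bound_of_continuousOn hcont
  rw [intervalIntegrable_iff, Set.uIoc_of_le huv]
  apply MeasureTheory.Integrable.mono' (g := fun _ => (b - a) * C)
    (MeasureTheory.integrable_const _)
  · apply MeasureTheory.AEStronglyMeasurable.mul
    · exact (Gpp_measurable a b t).aestronglyMeasurable
    · exact (hcont.aestronglyMeasurable measurableSet_Icc).mono_measure
        (MeasureTheory.Measure.restrict_mono
          ((Set.Ioc_subset_Icc_self).trans (Set.Icc_subset_Icc hu hv)) le_rfl)
  · filter_upwards [MeasureTheory.ae_restrict_mem measurableSet_Ioc] with z hz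
    have hz' : z ∈ Set.Icc a b := ⟨by linarith [hz.1], by linarith [hz.2]⟩
    rw [Real.norm_eq_abs, abs_mul]
    have h1 := Gpp_bound hab ht hz'
    have h2 := hC z hz'
    have h3 : |f'' z| ≤ C := by rwa [Real.norm_eq_abs] at h2
    have h4 : (0:ℝ) ≤ |f'' z| := abs_nonneg _
    nlinarith [abs_nonneg (Gpp a b t z)]

/-- The key reproducing property: `∫_a^b Gpp a b t z * f''(z) dz = f t`. -/
lemma Gpp_reproduces {a b : ℝ} (hab : a < b) (f f' f'' : ℝ → ℝ)
    (hf' : ∀ t ∈ Set.Icc a b, HasDerivWithinAt f (f' t) (Set.Icc a b) t)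
    (hf'' : ∀ t ∈ Set.Icc a b, HasDerivWithinAt f' (f'' t) (Set.Icc a b) t)
    (hcont : ContinuousOn f'' (Set.Icc a b))
    (ha : f a = 0) (hb : f b = 0)
    {t : ℝ} (ht : t ∈ Set.Icc a b) :
    ∫ z in a..b, Gpp a b t z * f'' z = f t := by
  obtain ⟨ht1, ht2⟩ := ht
  have hba : (0:ℝ) < b - a := by linarith
  have i1 := Gpp_mul_intervalIntegrable hab ⟨ht1, ht2⟩ f'' hcont ht1 le_rfl ht2
  have i2 := Gpp_mul_intervalIntegrable hab ⟨ht1, ht2⟩ f'' hcont ht2 ht1 le_rfl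
  rw [← intervalIntegral.integral_add_adjacent_intervals i1 i2]
  have hne : ∀ᵐ z : ℝ ∂MeasureTheory.volume, z ≠ t := by
    rw [MeasureTheory.ae_iff]
    simpa using Real.volume_singleton (a := t)
  have e1 : ∫ z in a..t, Gpp a b t z * f'' z
      = ∫ z in a..t, (t - b) / (b - a) * ((z - a) * f'' z) := by
    apply intervalIntegral.integral_congr_ae
    filter_upwards [hne] with z hz hmem
    rw [Set.uIoc_of_le ht1] at hmem
    simp only [Gpp]
    rw [if_pos (lt_of_le_of_ne hmem.2 hz)]
    ring
  have e2 : ∫ z in t..b, Gpp a b t z * f'' z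
      = ∫ z in t..b, (t - a) / (b - a) * ((z - b) * f'' z) := by
    apply intervalIntegral.integral_congr
    intro z hmem
    rw [Set.uIcc_of_le ht2] at hmem
    simp only [Gpp]
    rw [if_neg (not_lt.2 hmem.1)]
    ring
  rw [e1, e2, intervalIntegral.integral_const_mul, intervalIntegral.integral_const_mul,
    ftc_part f f' f'' hf' hf'' hcont a ht1 le_rfl ht2,
    ftc_part f f' f'' hf' hf'' hcont b ht2 ht1 le_rfl, ha, hb]
  field_simp
  ring

/-- If `k` is continuous on `[a,b]` and
`η''(z) = ∫_a^b G''_t(z) k(t) dt`, then for every `f` twice continuously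
differentiable on `[a,b]` with `f(a) = f(b) = 0` one has
`∫_a^b η''(z) f''(z) dz = ∫_a^b k(t) f(t) dt`:  the function with second
derivative `η''` is the Riesz representer of the functional
`f ↦ ∫_a^b k(t) f(t) dt` for the inner product `⟨u,v⟩ = ∫_a^b u'' v''`. -/
theorem stmt3 {a b : ℝ} (hab : a < b) (k : ℝ → ℝ) (hk : ContinuousOn k (Set.Icc a b))
    (η'' : ℝ → ℝ) (hη'' : ∀ z, η'' z = ∫ t in a..b, Gpp a b t z * k t)
    (f f' f'' : ℝ → ℝ)
    (hf' : ∀ t ∈ Set.Icc a b, HasDerivWithinAt f (f' t) (Set.Icc a b) t)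
    (hf'' : ∀ t ∈ Set.Icc a b, HasDerivWithinAt f' (f'' t) (Set.Icc a b) t)
    (hcont : ContinuousOn f'' (Set.Icc a b))
    (ha : f a = 0) (hb : f b = 0) :
    ∫ z in a..b, η'' z * f'' z = ∫ t in a..b, k t * f t := by
  obtain ⟨Ck, hCk⟩ := (isCompact_Icc (a := a) (b := b)).exists_bound_of_continuousOn hk
  obtain ⟨Cf, hCf⟩ := (isCompact_Icc (a := a) (b := b)).exists_bound_of_continuousOn hcont
  set μ : MeasureTheory.Measure ℝ := MeasureTheory.volume.restrict (Set.Ioc a b) with hμ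
  have hprod : μ.prod μ
      = (MeasureTheory.volume.prod MeasureTheory.volume).restrict
        ((Set.Ioc a b) ×ˢ (Set.Ioc a b)) := MeasureTheory.Measure.prod_restrict _ _
  have hFmeas : MeasureTheory.AEStronglyMeasurable
      (fun p : ℝ × ℝ => Gpp a b p.2 p.1 * k p.2 * f'' p.1) (μ.prod μ) := by
    apply MeasureTheory.AEStronglyMeasurable.mul
    apply MeasureTheory.AEStronglyMeasurable.mul
    · exact ((Gpp_measurable2 a b).comp measurable_swap).aestronglyMeasurable
    · exact ((hk.aestronglyMeasurable measurableSet_Icc).mono_measure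
        (MeasureTheory.Measure.restrict_mono (μ := MeasureTheory.volume) Set.Ioc_subset_Icc_self le_rfl)).comp_snd
    · exact ((hcont.aestronglyMeasurable measurableSet_Icc).mono_measure
        (MeasureTheory.Measure.restrict_mono (μ := MeasureTheory.volume) Set.Ioc_subset_Icc_self le_rfl)).comp_fst
  have hCk0 : 0 ≤ Ck := le_trans (norm_nonneg _) (hCk a (Set.left_mem_Icc.2 hab.le))
  have hCf0 : 0 ≤ Cf := le_trans (norm_nonneg _) (hCf a (Set.left_mem_Icc.2 hab.le))
  have hFint : MeasureTheory.Integrable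
      (fun p : ℝ × ℝ => Gpp a b p.2 p.1 * k p.2 * f'' p.1) (μ.prod μ) := by
    apply MeasureTheory.Integrable.mono'
      (MeasureTheory.integrable_const ((b - a) * Ck * Cf)) hFmeas
    rw [hprod]
    filter_upwards [MeasureTheory.ae_restrict_mem (measurableSet_Ioc.prod measurableSet_Ioc)]
      with p hp
    obtain ⟨hp1, hp2⟩ := hp
    have hz : p.1 ∈ Set.Icc a b := Set.Ioc_subset_Icc_self hp1
    have ht : p.2 ∈ Set.Icc a b := Set.Ioc_subset_Icc_self hp2
    have h1 := Gpp_bound hab ht hz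
    have h2 := hCk p.2 ht
    have h3 := hCf p.1 hz
    rw [Real.norm_eq_abs] at h2 h3 ⊢
    rw [abs_mul, abs_mul]
    have g0 : (0:ℝ) ≤ |Gpp a b p.2 p.1| := abs_nonneg _
    have k0 : (0:ℝ) ≤ |k p.2| := abs_nonneg _
    have f0 : (0:ℝ) ≤ |f'' p.1| := abs_nonneg _
    calc |Gpp a b p.2 p.1| * |k p.2| * |f'' p.1|
        ≤ (b - a) * Ck * |f'' p.1| :=
          mul_le_mul (mul_le_mul h1 h2 k0 (by linarith)) le_rfl f0 (mul_nonneg (by linarith) hCk0)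
      _ ≤ (b - a) * Ck * Cf :=
          mul_le_mul le_rfl h3 f0 (mul_nonneg (by linarith) hCk0)
  have step1 : ∫ z in a..b, η'' z * f'' z
      = ∫ z in a..b, ∫ t in a..b, Gpp a b t z * k t * f'' z := by
    apply intervalIntegral.integral_congr
    intro z _
    show η'' z * f'' z = ∫ t in a..b, Gpp a b t z * k t * f'' z
    rw [hη'' z, ← intervalIntegral.integral_mul_const]
  rw [step1]
  rw [intervalIntegral.integral_of_le hab.le]
  simp_rw [intervalIntegral.integral_of_le hab.le]
  rw [show (∫ z in Set.Ioc a b, ∫ t in Set.Ioc a b,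
      Gpp a b t z * k t * f'' z ∂MeasureTheory.volume ∂MeasureTheory.volume)
    = ∫ z, ∫ t, Gpp a b t z * k t * f'' z ∂μ ∂μ from rfl]
  rw [MeasureTheory.integral_integral_swap hFint]
  apply MeasureTheory.setIntegral_congr_fun measurableSet_Ioc
  intro t ht
  have ht' : t ∈ Set.Icc a b := Set.Ioc_subset_Icc_self ht
  have : (fun z => Gpp a b t z * k t * f'' z) = fun z => k t * (Gpp a b t z * f'' z) := by
    funext z; ring
  show ∫ z, Gpp a b t z * k t * f'' z ∂μ = k t * f t
  rw [this, MeasureTheory.integral_const_mul, hμ,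
    ← intervalIntegral.integral_of_le hab.le,
    Gpp_reproduces hab f f' f'' hf' hf'' hcont ha hb ht']
end

section
/- For every g ∈ ℝ^N, the set M of least-squares solutions M = {f ∈ H : ‖K f − g‖₂ ≤ ‖K h − g‖₂ for all h ∈ H} is nonempty, there is a unique element f† ∈ M of minimal norm (i.e., ‖f†‖ ≤ ‖f‖ for every f ∈ M), and this minimal-norm solution is a linear combination of the Riesz representers: there exist coefficients c_1, …, c_N ∈ ℝ with f† = Σ_{j=1}^N c_j · η_j. -/
open RealInnerProductSpace

/-- For every data vector `g ∈ ℝ^N`, the set `M` of least-squares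
solutions of `K f = g` is nonempty, contains a unique element `f†` of minimal norm,
and this minimal-norm solution is a linear combination of the Riesz representers:
`f† = Σ_j c_j • η_j` for some coefficients `c ∈ ℝ^N`. -/
theorem stmt7 {H : Type*} [NormedAddCommGroup H] [InnerProductSpace ℝ H] [CompleteSpace H]
    {N : ℕ} (hN : 0 < N) (K : H →L[ℝ] EuclideanSpace ℝ (Fin N))
    (η : Fin N → H) (hη : ∀ (f : H) (j : Fin N), K f j = ⟪η j, f⟫)
    (g : EuclideanSpace ℝ (Fin N))
    (M : Set H) (hM : M = {f : H | ∀ h : H, ‖K f - g‖ ≤ ‖K h - g‖}) :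
    M.Nonempty ∧
    ∃ fdag ∈ M,
      (∀ f ∈ M, ‖fdag‖ ≤ ‖f‖) ∧
      (∀ f ∈ M, (∀ h ∈ M, ‖f‖ ≤ ‖h‖) → f = fdag) ∧
      ∃ c : Fin N → ℝ, fdag = ∑ j, c j • η j := by
  -- the range of `K`, a finite-dimensional (hence projectable) subspace of `ℝ^N`
  set R : Submodule ℝ (EuclideanSpace ℝ (Fin N)) := LinearMap.range (K : H →ₗ[ℝ] _) with hR
  set q : EuclideanSpace ℝ (Fin N) := (R.orthogonalProjectionOnto g : EuclideanSpace ℝ (Fin N))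
    with hq
  have hqR : q ∈ R := (R.orthogonalProjectionOnto g).2
  obtain ⟨f0, hf0⟩ : ∃ f0 : H, K f0 = q := hqR
  have hqR : q ∈ R := ⟨f0, hf0⟩
  have hperp : g - q ∈ Rᗮ := Submodule.sub_starProjection_mem_orthogonal (K := R) g
  -- Pythagoras: for `y ∈ R`, `‖y - g‖² = ‖y - q‖² + ‖q - g‖²`
  have pyth : ∀ y, y ∈ R → ‖y - g‖ ^ 2 = ‖y - q‖ ^ 2 + ‖q - g‖ ^ 2 := by
    intro y hy
    have hin : ⟪y - q, q - g⟫ = 0 := by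
      have h0 := (Submodule.mem_orthogonal _ _).mp hperp _ (R.sub_mem hy hqR)
      have h2 : ⟪y - q, g - q⟫ = 0 := h0
      have h3 : ⟪y - q, -(g - q)⟫ = 0 := by rw [inner_neg_right, h2, neg_zero]
      simpa using h3
    have hin' : ⟪q - g, y - q⟫ = 0 := by rwa [real_inner_comm] at hin
    have hdecomp : y - g = (y - q) + (q - g) := by abel
    rw [hdecomp, ← real_inner_self_eq_norm_sq, ← real_inner_self_eq_norm_sq,
      ← real_inner_self_eq_norm_sq, inner_add_add_self, hin, hin']
    ring
  -- membership in `M` is equivalent to `K f = q`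
  have hMq : ∀ f : H, f ∈ M ↔ K f = q := by
    intro f
    rw [hM]
    constructor
    · intro hf
      have h1 : ‖K f - g‖ ≤ ‖q - g‖ := by simpa [hf0] using hf f0
      have h2 := pyth (K f) ⟨f, rfl⟩
      have ha := norm_nonneg (K f - q)
      have hb := norm_nonneg (q - g)
      have hc := norm_nonneg (K f - g)
      have h4 : ‖K f - q‖ = 0 := by nlinarith
      exact sub_eq_zero.mp (norm_eq_zero.mp h4)
    · intro hf h
      have h2 := pyth (K h) ⟨h, rfl⟩
      rw [hf]
      have ha := norm_nonneg (K h - q)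
      have hb := norm_nonneg (q - g)
      have hc := norm_nonneg (K h - g)
      nlinarith
  -- the span of the representers
  set S : Submodule ℝ H := Submodule.span ℝ (Set.range η) with hS
  haveI : FiniteDimensional ℝ S := FiniteDimensional.span_of_finite ℝ (Set.finite_range η)
  -- `f ∈ Sᗮ → K f = 0`
  have hker : ∀ f : H, f ∈ Sᗮ → K f = 0 := by
    intro f hf
    ext j
    have : ⟪η j, f⟫ = 0 := (Submodule.mem_orthogonal _ _).mp hf _
      (Submodule.subset_span (Set.mem_range_self j))
    simpa [hη f j] using this
  -- conversely `K f = 0 → f ∈ Sᗮ`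
  have hker' : ∀ f : H, K f = 0 → f ∈ Sᗮ := by
    intro f hf
    rw [Submodule.mem_orthogonal]
    intro u hu
    induction hu using Submodule.span_induction with
    | mem u hu =>
        obtain ⟨j, rfl⟩ := hu
        have := congrFun (congrArg (fun v : EuclideanSpace ℝ (Fin N) => (v : Fin N → ℝ)) hf) j
        simpa [hη f j] using this
    | zero => simp
    | add u v _ _ hu hv => rw [inner_add_left, hu, hv]; ring
    | smul a u _ hu => rw [inner_smul_left, hu]; simp
  set fdag : H := (S.orthogonalProjectionOnto f0 : H) with hfdag
  have hfdagS : fdag ∈ S := (S.orthogonalProjectionOnto f0).2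
  have hKfdag : K fdag = q := by
    have h1 : f0 - fdag ∈ Sᗮ := Submodule.sub_starProjection_mem_orthogonal (K := S) f0
    have h2 := hker _ h1
    have : K f0 - K fdag = 0 := by rw [← map_sub]; exact h2
    rw [← hf0]
    have := sub_eq_zero.mp this
    exact this.symm
  have hfdagM : fdag ∈ M := (hMq fdag).mpr hKfdag
  -- orthogonality decomposition of any `f ∈ M`
  have hdecomp : ∀ f ∈ M, ‖f‖ ^ 2 = ‖fdag‖ ^ 2 + ‖f - fdag‖ ^ 2 := by
    intro f hf
    have h1 : K (f - fdag) = 0 := by rw [map_sub, (hMq f).mp hf, hKfdag, sub_self]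
    have h2 : f - fdag ∈ Sᗮ := hker' _ h1
    have hin : ⟪fdag, f - fdag⟫ = 0 := (Submodule.mem_orthogonal _ _).mp h2 _ hfdagS
    have hin' : ⟪f - fdag, fdag⟫ = 0 := by rw [real_inner_comm]; exact hin
    have key : ‖fdag + (f - fdag)‖ ^ 2 = ‖fdag‖ ^ 2 + ‖f - fdag‖ ^ 2 := by
      rw [← real_inner_self_eq_norm_sq, ← real_inner_self_eq_norm_sq,
        ← real_inner_self_eq_norm_sq, inner_add_add_self, hin, hin']
      ring
    have heq : fdag + (f - fdag) = f := by abel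
    rw [heq] at key
    exact key
  refine ⟨⟨f0, (hMq f0).mpr hf0⟩, fdag, hfdagM, ?_, ?_, ?_⟩
  · intro f hf
    have := hdecomp f hf
    nlinarith [norm_nonneg f, norm_nonneg fdag, sq_nonneg (‖f - fdag‖)]
  · intro f hf hmin
    have h1 := hdecomp f hf
    have h2 : ‖f‖ ≤ ‖fdag‖ := hmin fdag hfdagM
    have : ‖f - fdag‖ = 0 := by nlinarith [norm_nonneg (f - fdag), norm_nonneg f, norm_nonneg fdag]
    exact sub_eq_zero.mp (norm_eq_zero.mp this)
  · obtain ⟨c, hc⟩ := (Submodule.mem_span_range_iff_exists_fun ℝ).mp hfdagS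
    exact ⟨c, hc.symm⟩
end
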